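/- The hypergeometric sum ∑_{n=0}^∞ ((1/2)_n)² / ((3/2)_n · n!) equals π/2, where (x)_n denotes the Pochhammer symbol (rising factorial). -/

import Mathlib

open Real

/-- Pochhammer symbol (rising factorial) `(x)_n`. -/
noncomputable def poch (x : ℝ) (n : ℕ) : ℝ := (ascPochhammer ℝ n).eval x


noncomputable def aA (n : ℕ) : ℝ := n.centralBinom / 4 ^ n

lemma aA_pos (n : ℕ) : 0 < aA n :=
  div_pos (by exact_mod_cast n.centralBinom_pos) (by positivity)

lemma aA_le_one (n : ℕ) : aA n ≤ 1 := by
  rw [aA, div_le_one (by positivity)]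
  have : n.centralBinom ≤ 4 ^ n := by
    calc n.centralBinom = (2 * n).choose n := rfl
    _ ≤ (2 * n + 1).choose n := Nat.choose_le_choose n (Nat.le_succ _)
    _ ≤ 4 ^ n := Nat.choose_middle_le_pow n
  exact_mod_cast this

lemma aA_rec (n : ℕ) : (2 * (n + 1) : ℝ) * aA (n + 1) = (2 * n + 1) * aA n := by
  have h := Nat.succ_mul_centralBinom_succ n
  have h' : ((n + 1 : ℕ) : ℝ) * (n + 1).centralBinom = 2 * (2 * n + 1) * n.centralBinom := by
    exact_mod_cast congrArg (Nat.cast : ℕ → ℝ) h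
  rw [aA, aA]
  push_cast at h' ⊢
  field_simp
  linear_combination (2 * (4:ℝ)^n) * h'


lemma poch_half (n : ℕ) : poch (1/2) n = (2*n).factorial / (4 ^ n * n.factorial) := by
  induction n with
  | zero => simp [poch]
  | succ n ih =>
    have h1 : poch (1/2) (n+1) = poch (1/2) n * (1/2 + n) := ascPochhammer_succ_eval n _
    rw [h1, ih]
    have h2 : (2*(n+1)).factorial = (2*n+2) * ((2*n+1) * (2*n).factorial) := by
      have : 2*(n+1) = (2*n+1) + 1 := by ring
      rw [this, Nat.factorial_succ, Nat.factorial_succ]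
    have h3 : (n+1).factorial = (n+1) * n.factorial := Nat.factorial_succ n
    rw [h2, h3]
    have hf : ((2*n).factorial : ℝ) ≠ 0 := by exact_mod_cast (2*n).factorial_ne_zero
    have hf' : (n.factorial : ℝ) ≠ 0 := by exact_mod_cast n.factorial_ne_zero
    push_cast
    field_simp
    ring

lemma poch_threehalf (n : ℕ) : poch (3/2) n = (2*n+1).factorial / (4 ^ n * n.factorial) := by
  induction n with
  | zero => simp [poch]
  | succ n ih =>
    have h1 : poch (3/2) (n+1) = poch (3/2) n * (3/2 + n) := ascPochhammer_succ_eval n _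
    rw [h1, ih]
    have h2 : (2*(n+1)+1).factorial = (2*n+3) * ((2*n+2) * (2*n+1).factorial) := by
      have : 2*(n+1)+1 = (2*n+2) + 1 := by ring
      rw [this, Nat.factorial_succ, Nat.factorial_succ]
    have h3 : (n+1).factorial = (n+1) * n.factorial := Nat.factorial_succ n
    rw [h2, h3]
    have hf : ((2*n+1).factorial : ℝ) ≠ 0 := by exact_mod_cast (2*n+1).factorial_ne_zero
    have hf' : (n.factorial : ℝ) ≠ 0 := by exact_mod_cast n.factorial_ne_zero
    push_cast
    field_simp
    ring

lemma term_eq (n : ℕ) :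
    (poch (1/2) n) ^ 2 / (poch (3/2) n * n.factorial) = aA n / (2*n+1) := by
  rw [poch_half, poch_threehalf, aA]
  have hcb : (n.centralBinom : ℝ) * n.factorial * n.factorial = (2*n).factorial := by
    have := Nat.choose_mul_factorial_mul_factorial (Nat.le_mul_of_pos_left n (by norm_num) : n ≤ 2*n)
    have h2 : 2*n - n = n := by omega
    rw [h2] at this
    rw [Nat.centralBinom_eq_two_mul_choose]
    exact_mod_cast congrArg (Nat.cast : ℕ → ℝ) this
  have hfs : ((2*n+1).factorial : ℝ) = (2*n+1) * (2*n).factorial := by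
    exact_mod_cast congrArg (Nat.cast : ℕ → ℝ) (Nat.factorial_succ (2*n))
  have hf : ((2*n).factorial : ℝ) ≠ 0 := by exact_mod_cast (2*n).factorial_ne_zero
  have hf' : (n.factorial : ℝ) ≠ 0 := by exact_mod_cast n.factorial_ne_zero
  have h4 : ((4:ℝ)) ^ n ≠ 0 := by positivity
  have h21 : ((2*n+1:ℕ) : ℝ) ≠ 0 := by positivity
  rw [hfs]
  field_simp
  push_cast
  linear_combination -hcb

lemma summable_nd {r : ℝ} (hr : |r| < 1) : Summable (fun n : ℕ => (n : ℝ) * r ^ (n - 1)) := by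
  rw [← summable_nat_add_iff 1]
  have h1 : Summable (fun n : ℕ => (n : ℝ) * r ^ n) := by
    have := summable_pow_mul_geometric_of_norm_lt_one 1 (by rwa [Real.norm_eq_abs] : ‖r‖ < 1)
    simpa using this
  have h2 : Summable (fun n : ℕ => r ^ n) := summable_geometric_of_abs_lt_one hr
  have := h1.add h2
  refine this.congr fun n => ?_
  simp [add_mul]

lemma summable_d {y : ℝ} (hy : |y| < 1) : Summable (fun n : ℕ => aA n * ((n : ℝ) * y ^ (n - 1))) := by
  refine (summable_nd (r := |y|) (by rwa [abs_abs])).of_norm_bounded fun n => ?_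
  rw [Real.norm_eq_abs, abs_mul, abs_mul]
  have h1 : |aA n| ≤ 1 := abs_le.2 ⟨by linarith [(aA_pos n).le], aA_le_one n⟩
  have h2 : |(n:ℝ)| * |y ^ (n-1)| ≤ (n:ℝ) * |y| ^ (n-1) := by
    rw [abs_pow, Nat.abs_cast]
  calc |aA n| * (|(n:ℝ)| * |y ^ (n-1)|) ≤ 1 * ((n:ℝ) * |y| ^ (n-1)) := by
        apply mul_le_mul h1 h2 (by positivity) one_pos.le
    _ = (n:ℝ) * |y| ^ (n-1) := one_mul _

lemma summable_g {y : ℝ} (hy : |y| < 1) : Summable (fun n : ℕ => aA n * y ^ n) := by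
  refine (summable_geometric_of_abs_lt_one (r := |y|) (by rwa [abs_abs])).of_norm_bounded fun n => ?_
  rw [Real.norm_eq_abs, abs_mul, abs_pow]
  have h1 : |aA n| ≤ 1 := abs_le.2 ⟨by linarith [(aA_pos n).le], aA_le_one n⟩
  calc |aA n| * |y| ^ n ≤ 1 * |y| ^ n := by
        apply mul_le_mul_of_nonneg_right h1 (by positivity)
    _ = |y| ^ n := one_mul _


lemma ode {y : ℝ} (hy : |y| < 1) :
    2 * (1 - y) * (∑' n : ℕ, aA n * ((n : ℝ) * y ^ (n - 1))) = ∑' n : ℕ, aA n * y ^ n := by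
  set d : ℕ → ℝ := fun n => aA n * ((n : ℝ) * y ^ (n - 1)) with hd
  set F : ℕ → ℝ := fun n => 2 * n * aA n * y ^ (n - 1) with hF
  have hsd : Summable d := summable_d hy
  have hsg : Summable (fun n : ℕ => aA n * y ^ n) := summable_g hy
  have hFd : ∀ n, F n = 2 * d n := fun n => by simp [hF, hd]; ring
  have hsF : Summable F := by
    refine (hsd.mul_left 2).congr fun n => (hFd n).symm
  -- telescoping: HasSum (fun n => F n - F (n+1)) 0
  have htel : HasSum (fun n => F n - F (n + 1)) 0 := by
    have hsum : Summable (fun n => F n - F (n + 1)) :=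
      hsF.sub ((summable_nat_add_iff 1).2 hsF)
    rw [hsum.hasSum_iff_tendsto_nat]
    have hps : ∀ N, ∑ i ∈ Finset.range N, (F i - F (i + 1)) = F 0 - F N := by
      intro N; exact Finset.sum_range_sub' F N
    simp only [hps]
    have hF0 : F 0 = 0 := by simp [hF]
    rw [hF0]
    simpa using hsF.tendsto_atTop_zero.const_sub 0
  have hkey : HasSum (fun n => 2 * (1 - y) * d n) (∑' n : ℕ, aA n * y ^ n) := by
    have h1 : HasSum (fun n => (F n - F (n + 1)) + aA n * y ^ n)
        (0 + ∑' n : ℕ, aA n * y ^ n) := htel.add hsg.hasSum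
    rw [zero_add] at h1
    refine h1.congr_fun fun n => ?_
    have hrec : (2 * ((n:ℝ) + 1)) * aA (n + 1) = (2 * n + 1) * aA n := by
      have := aA_rec n; push_cast at this ⊢; linarith
    have hF1 : F (n + 1) = (2 * (n:ℝ) + 1) * aA n * y ^ n := by
      simp only [hF, Nat.add_sub_cancel]
      push_cast
      rw [show (2:ℝ) * (↑n + 1) * aA (n+1) * y ^ n = ((2 * ((n:ℝ) + 1)) * aA (n + 1)) * y ^ n by ring,
        hrec]
    rcases Nat.eq_zero_or_pos n with h0 | hpos
    · subst h0
      have ha0 : aA 0 = 1 := by norm_num [aA, Nat.centralBinom]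
      have ha1 : aA 1 = 1/2 := by norm_num [aA, Nat.centralBinom]
      simp [hF, hd, hF1, ha0, ha1]
    · have hn1 : n - 1 + 1 = n := Nat.succ_pred_eq_of_pos hpos
      have hyp : y ^ n = y ^ (n - 1) * y := by rw [← pow_succ, hn1]
      rw [hF1]
      simp only [hF, hd]
      rw [hyp]
      ring
  have := hkey.tsum_eq
  rw [← this, tsum_mul_left]

noncomputable def Gf (y : ℝ) : ℝ := ∑' n : ℕ, aA n * y ^ n
noncomputable def DGf (y : ℝ) : ℝ := ∑' n : ℕ, aA n * ((n : ℝ) * y ^ (n - 1))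

lemma hasDerivAt_Gf {r : ℝ} (hr0 : 0 < r) (hr1 : r < 1) {y : ℝ}
    (hy : y ∈ Set.Ioo (-r) r) : HasDerivAt Gf (DGf y) y := by
  have habs : |r| < 1 := by rwa [abs_of_pos hr0]
  unfold Gf DGf
  refine hasDerivAt_tsum_of_isPreconnected (u := fun n : ℕ => (n : ℝ) * r ^ (n - 1)) (y₀ := 0)
    (summable_nd habs) isOpen_Ioo (convex_Ioo _ _).isPreconnected
    (fun n z _ => (hasDerivAt_pow n z).const_mul (aA n)) ?_ ?_ ?_ hy
  · intro n z hz
    have hz' : |z| ≤ r := by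
      rw [abs_le]; exact ⟨hz.1.le, hz.2.le⟩
    rw [Real.norm_eq_abs, abs_mul, abs_mul, abs_pow, Nat.abs_cast]
    have h1 : |aA n| ≤ 1 := abs_le.2 ⟨by linarith [(aA_pos n).le], aA_le_one n⟩
    have h2 : |z| ^ (n-1) ≤ r ^ (n-1) := pow_le_pow_left₀ (abs_nonneg z) hz' _
    calc |aA n| * ((n:ℝ) * |z| ^ (n-1)) ≤ 1 * ((n:ℝ) * r ^ (n-1)) := by
          apply mul_le_mul h1 (by exact mul_le_mul_of_nonneg_left h2 (Nat.cast_nonneg n))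
            (by positivity) one_pos.le
      _ = (n:ℝ) * r ^ (n-1) := one_mul _
  · exact ⟨by linarith, hr0⟩
  · refine summable_of_ne_finset_zero (s := {0}) fun n hn => ?_
    have : n ≠ 0 := by simpa using hn
    simp [zero_pow this]

lemma Gf_eq {x : ℝ} (hx0 : 0 ≤ x) (hx1 : x < 1) : Gf x = 1 / Real.sqrt (1 - x) := by
  set r : ℝ := (1 + x) / 2 with hrdef
  have hr0 : 0 < r := by rw [hrdef]; linarith
  have hr1 : r < 1 := by rw [hrdef]; linarith
  have hxr : x < r := by rw [hrdef]; linarith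
  set h : ℝ → ℝ := fun y => Gf y * Real.sqrt (1 - y) with hh
  have hder : ∀ y ∈ Set.Icc 0 x, HasDerivAt h 0 y := by
    intro y hy
    have hy0 : 0 ≤ y := hy.1
    have hyx : y ≤ x := hy.2
    have hyr : y ∈ Set.Ioo (-r) r := ⟨by linarith, by linarith⟩
    have hy1 : y < 1 := by linarith
    have h1y : (0:ℝ) < 1 - y := by linarith
    have hG := hasDerivAt_Gf hr0 hr1 hyr
    have hs : HasDerivAt (fun z : ℝ => Real.sqrt (1 - z)) (-(1 / (2 * Real.sqrt (1 - y)))) y := by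
      have h2 : HasDerivAt (fun z : ℝ => 1 - z) (-1) y := by
        simpa using (hasDerivAt_id y).const_sub 1
      have := (Real.hasDerivAt_sqrt h1y.ne').comp y h2
      simpa [mul_comm, Function.comp_def] using this
    have hprod := hG.mul hs
    have hode : 2 * (1 - y) * DGf y = Gf y := by
      have : |y| < 1 := by rw [abs_of_nonneg hy0]; exact hy1
      exact ode this
    have hzero : DGf y * Real.sqrt (1 - y) + Gf y * -(1 / (2 * Real.sqrt (1 - y))) = 0 := by
      have hsq : Real.sqrt (1 - y) ^ 2 = 1 - y := Real.sq_sqrt h1y.le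
      have hsp : 0 < Real.sqrt (1 - y) := Real.sqrt_pos.2 h1y
      have hD : DGf y = Gf y / (2 * (1 - y)) := by
        rw [eq_div_iff (by positivity)]
        linarith [hode]
      rw [hD]
      field_simp
      linear_combination (Gf y) * hsq
    rw [hh]
    exact hzero ▸ hprod
  have hconst : h x = h 0 := by
    rcases eq_or_lt_of_le hx0 with h0 | h0
    · rw [← h0]
    · have := constant_of_has_deriv_right_zero
        (f := h) (a := 0) (b := x)
        (fun y hy => ((hder y hy).continuousAt).continuousWithinAt)
        (fun y hy => ((hder y ⟨hy.1, hy.2.le⟩).hasDerivWithinAt))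
      exact this x ⟨hx0, le_refl x⟩
  have hG0 : Gf 0 = 1 := by
    rw [Gf]
    rw [tsum_eq_single 0 (fun n hn => by simp [zero_pow hn])]
    norm_num [aA, Nat.centralBinom]
  have hs1 : Real.sqrt (1 - x) ≠ 0 := by
    have : (0:ℝ) < 1 - x := by linarith
    positivity
  have : Gf x * Real.sqrt (1 - x) = 1 := by
    have := hconst
    rw [hh] at this
    simpa [hG0] using this
  field_simp at this ⊢
  linarith [this]

noncomputable def cA (n : ℕ) : ℝ := aA n / (2 * n + 1)

lemma cA_pos (n : ℕ) : 0 < cA n := div_pos (aA_pos n) (by positivity)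

lemma cA_le_one (n : ℕ) : cA n ≤ 1 := by
  rw [cA, div_le_one (by positivity)]
  have h1 : (1:ℝ) ≤ 2 * n + 1 := by
    have := Nat.cast_nonneg (α := ℝ) n
    linarith
  linarith [aA_le_one n]

lemma cA_mul (n : ℕ) : cA n * (2 * (n:ℝ) + 1) = aA n := by
  rw [cA]; field_simp

noncomputable def Qf (y : ℝ) : ℝ := ∑' n : ℕ, cA n * y ^ (2 * n + 1)

lemma summable_q {y : ℝ} (hy : |y| < 1) : Summable (fun n : ℕ => cA n * y ^ (2 * n + 1)) := by
  have hgeo : Summable (fun n : ℕ => |y| ^ (2 * n + 1)) := by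
    have h2 : |y| ^ 2 < 1 := by
      have := abs_nonneg y
      nlinarith
    have := (summable_geometric_of_lt_one (by positivity) h2).mul_left |y|
    refine this.congr fun n => ?_
    rw [pow_add, pow_mul, pow_one]; ring
  refine hgeo.of_norm_bounded fun n => ?_
  rw [Real.norm_eq_abs, abs_mul, abs_pow]
  have h1 : |cA n| ≤ 1 := abs_le.2 ⟨by linarith [(cA_pos n).le], cA_le_one n⟩
  calc |cA n| * |y| ^ (2*n+1) ≤ 1 * |y| ^ (2*n+1) :=
        mul_le_mul_of_nonneg_right h1 (by positivity)
    _ = |y| ^ (2*n+1) := one_mul _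

lemma hasDerivAt_Qf {r : ℝ} (hr0 : 0 < r) (hr1 : r < 1) {y : ℝ}
    (hy : y ∈ Set.Ioo (-r) r) :
    HasDerivAt Qf (∑' n : ℕ, cA n * ((2 * (n:ℝ) + 1) * y ^ (2 * n))) y := by
  unfold Qf
  refine hasDerivAt_tsum_of_isPreconnected
    (u := fun n : ℕ => (2 * (n:ℝ) + 1) * r ^ (2 * n)) (y₀ := 0)
    (g := fun (n : ℕ) (z : ℝ) => cA n * z ^ (2 * n + 1))
    (g' := fun (n : ℕ) (z : ℝ) => cA n * ((2 * (n:ℝ) + 1) * z ^ (2 * n)))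
    ?_ isOpen_Ioo (convex_Ioo _ _).isPreconnected ?_ ?_ ?_ ?_ hy
  · have h2 : r ^ 2 < 1 := by nlinarith
    have hs1 := summable_pow_mul_geometric_of_norm_lt_one (R := ℝ) 1
      (r := r ^ 2) (by rw [Real.norm_eq_abs, abs_of_pos (by positivity)]; exact h2)
    have hs2 := summable_geometric_of_lt_one (by positivity : (0:ℝ) ≤ r ^ 2) h2
    have := (hs1.mul_left 2).add hs2
    refine this.congr fun n => ?_
    rw [← pow_mul]
    push_cast
    ring
  · intro n z _
    have h := (hasDerivAt_pow (2 * n + 1) z).const_mul (cA n)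
    have he : (2 * n + 1 - 1) = 2 * n := by omega
    rw [he] at h
    have hc : (((2 * n + 1 : ℕ)) : ℝ) = 2 * (n:ℝ) + 1 := by push_cast; ring
    rw [hc] at h
    exact h
  · intro n z hz
    have hz' : |z| ≤ r := by rw [abs_le]; exact ⟨hz.1.le, hz.2.le⟩
    rw [Real.norm_eq_abs, abs_mul, abs_mul, abs_pow]
    have h1 : |cA n| ≤ 1 := abs_le.2 ⟨by linarith [(cA_pos n).le], cA_le_one n⟩
    have h2 : |z| ^ (2*n) ≤ r ^ (2*n) := pow_le_pow_left₀ (abs_nonneg z) hz' _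
    have h3 : |2 * (n:ℝ) + 1| = 2 * (n:ℝ) + 1 := abs_of_pos (by positivity)
    rw [h3]
    calc |cA n| * ((2*(n:ℝ)+1) * |z| ^ (2*n)) ≤ 1 * ((2*(n:ℝ)+1) * |z| ^ (2*n)) :=
          mul_le_mul_of_nonneg_right h1 (by positivity)
      _ = (2*(n:ℝ)+1) * |z| ^ (2*n) := one_mul _
      _ ≤ (2*(n:ℝ)+1) * r ^ (2*n) := mul_le_mul_of_nonneg_left h2 (by positivity)
  · exact ⟨by linarith, hr0⟩
  · refine summable_of_ne_finset_zero (s := {0}) fun n hn => ?_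
    have : 2 * n + 1 ≠ 0 := by omega
    simp [zero_pow this]

lemma Qf_eq {b : ℝ} (hb0 : 0 ≤ b) (hb1 : b < 1) : Qf b = Real.arcsin b := by
  set r : ℝ := (1 + b) / 2 with hrdef
  have hr0 : 0 < r := by rw [hrdef]; linarith
  have hr1 : r < 1 := by rw [hrdef]; linarith
  have hbr : b < r := by rw [hrdef]; linarith
  set φ : ℝ → ℝ := fun y => Qf y - Real.arcsin y with hφ
  have hder : ∀ y ∈ Set.Icc 0 b, HasDerivAt φ 0 y := by
    intro y hy
    have hy0 : 0 ≤ y := hy.1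
    have hy1 : y < 1 := lt_of_le_of_lt hy.2 hb1
    have hyr : y ∈ Set.Ioo (-r) r := ⟨by linarith, by linarith [hy.2]⟩
    have hQ := hasDerivAt_Qf hr0 hr1 hyr
    have hDQ : (∑' n : ℕ, cA n * ((2 * (n:ℝ) + 1) * y ^ (2 * n)))
        = 1 / Real.sqrt (1 - y ^ 2) := by
      have hy2 : y ^ 2 < 1 := by nlinarith
      have hy2' : 0 ≤ y ^ 2 := sq_nonneg y
      rw [← Gf_eq hy2' hy2, Gf]
      refine tsum_congr fun n => ?_
      rw [← pow_mul]
      rw [show cA n * ((2 * (n:ℝ) + 1) * y ^ (2 * n)) =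
        (cA n * (2 * (n:ℝ) + 1)) * y ^ (2 * n) by ring, cA_mul]
    rw [hDQ] at hQ
    have hA : HasDerivAt Real.arcsin (1 / Real.sqrt (1 - y ^ 2)) y :=
      Real.hasDerivAt_arcsin (by intro h; rw [h] at hy0; linarith) (ne_of_lt hy1)
    have := hQ.sub hA
    rw [sub_self] at this
    exact this
  have hconst : φ b = φ 0 := by
    rcases eq_or_lt_of_le hb0 with h0 | h0
    · rw [← h0]
    · have := constant_of_has_deriv_right_zero
        (f := φ) (a := 0) (b := b)
        (fun y hy => ((hder y hy).continuousAt).continuousWithinAt)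
        (fun y hy => ((hder y ⟨hy.1, hy.2.le⟩).hasDerivWithinAt))
      exact this b ⟨hb0, le_refl b⟩
  have hQ0 : Qf 0 = 0 := by
    rw [Qf]
    have : ∀ n : ℕ, cA n * (0:ℝ) ^ (2 * n + 1) = 0 := by
      intro n
      have : (2 * n + 1) ≠ 0 := by omega
      simp [zero_pow this]
    simp [this]
  have := hconst
  rw [hφ] at this
  simp only [hQ0, Real.arcsin_zero, sub_zero] at this
  linarith [this]

open Filter Topology in
lemma partial_le (N : ℕ) : ∑ n ∈ Finset.range N, cA n ≤ π / 2 := by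
  have key : ∀ b ∈ Set.Ioo (0:ℝ) 1,
      ∑ n ∈ Finset.range N, cA n * b ^ (2*n+1) ≤ π / 2 := by
    intro b hb
    have hab : |b| < 1 := by rw [abs_of_pos hb.1]; exact hb.2
    have hsum : Summable (fun n : ℕ => cA n * b ^ (2*n+1)) := summable_q hab
    have h1 : ∑ n ∈ Finset.range N, cA n * b^(2*n+1) ≤ ∑' n : ℕ, cA n * b^(2*n+1) :=
      Summable.sum_le_tsum _ (fun n _ => mul_nonneg (cA_pos n).le (pow_nonneg hb.1.le _)) hsum
    have h2 : (∑' n : ℕ, cA n * b^(2*n+1)) = Real.arcsin b := Qf_eq hb.1.le hb.2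
    rw [h2] at h1
    exact h1.trans (Real.arcsin_le_pi_div_two b)
  have hlim : Tendsto (fun b : ℝ => ∑ n ∈ Finset.range N, cA n * b ^ (2*n+1))
      (nhdsWithin 1 (Set.Iio 1)) (nhds (∑ n ∈ Finset.range N, cA n)) := by
    have hc : Continuous (fun b : ℝ => ∑ n ∈ Finset.range N, cA n * b ^ (2*n+1)) :=
      continuous_finset_sum _ fun i _ => continuous_const.mul (continuous_pow _)
    have h := (hc.tendsto 1).mono_left (nhdsWithin_le_nhds (s := Set.Iio 1))
    simpa using h
  refine le_of_tendsto hlim ?_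
  filter_upwards [Ioo_mem_nhdsLT_of_mem (by constructor <;> norm_num : (1:ℝ) ∈ Set.Ioc 0 1)]
    with b hb using key b hb

lemma summable_cA : Summable cA :=
  summable_of_sum_range_le (fun n => (cA_pos n).le) partial_le

open Filter Topology in
lemma tsum_cA : ∑' n : ℕ, cA n = π / 2 := by
  have hub : ∑' n : ℕ, cA n ≤ π / 2 :=
    tsum_le_of_sum_range_le (fun n => (cA_pos n).le) partial_le
  have hlb : π / 2 ≤ ∑' n : ℕ, cA n := by
    have harc : Tendsto Real.arcsin (nhdsWithin 1 (Set.Iio 1)) (nhds (π / 2)) := by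
      rw [show π / 2 = Real.arcsin 1 by rw [Real.arcsin_one]]
      exact (Real.continuous_arcsin.tendsto 1).mono_left
        (nhdsWithin_le_nhds (s := Set.Iio 1))
    refine le_of_tendsto harc ?_
    filter_upwards [Ioo_mem_nhdsLT_of_mem (by constructor <;> norm_num : (1:ℝ) ∈ Set.Ioc 0 1)]
      with b hb
    have hab : |b| < 1 := by rw [abs_of_pos hb.1]; exact hb.2
    have h2 : Real.arcsin b = ∑' n : ℕ, cA n * b^(2*n+1) := (Qf_eq hb.1.le hb.2).symm
    rw [h2]
    refine Summable.tsum_le_tsum (fun n => ?_) (summable_q hab) summable_cA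
    have hb1 : b ^ (2*n+1) ≤ 1 := pow_le_one₀ hb.1.le hb.2.le
    calc cA n * b^(2*n+1) ≤ cA n * 1 := mul_le_mul_of_nonneg_left hb1 (cA_pos n).le
      _ = cA n := mul_one _
  linarith

theorem stmt1 :
    ∑' n : ℕ, (poch (1/2) n) ^ 2 / (poch (3/2) n * n.factorial) = π / 2 := by
  have h : (fun n : ℕ => (poch (1/2) n) ^ 2 / (poch (3/2) n * n.factorial)) = cA := by
    funext n
    rw [term_eq]
    rfl
  rw [h, tsum_cA]
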